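/- There exists a universal constant C > 0 such that the following holds for all sufficiently large d (d ≥ 2): let f : {-1,1}^n → [0,1] be a polynomial of degree d with Var[f] ≥ 1/d. Then the fraction of inputs x ∈ {-1,1}^n that are (1, Var[f]/d^C)-sensitive, i.e. for which there exists a coordinate i ∈ [n] with |f(x) − f(x^{(i)})| ≥ Var[f]/d^C, is at least Var[f]³/d^C. -/

import Mathlib

open Finset

noncomputable section

/-- The ±1 value of a Boolean bit: `true ↦ 1`, `false ↦ -1`. -/
def sgnB (b : Bool) : ℝ := if b then 1 else -1

/-- The character `χ_S(x) = ∏_{i ∈ S} x_i` on the Boolean cube. -/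
def chiB {n : ℕ} (S : Finset (Fin n)) (x : Fin n → Bool) : ℝ := ∏ i ∈ S, sgnB (x i)

/-- Expectation over a uniformly random point of the cube `{-1,1}^n`. -/
def bexpect {n : ℕ} (f : (Fin n → Bool) → ℝ) : ℝ := (∑ x : Fin n → Bool, f x) / 2 ^ n

/-- The Fourier coefficient `f̂(S) = E_x [f(x) χ_S(x)]`. -/
def fCoeff {n : ℕ} (f : (Fin n → Bool) → ℝ) (S : Finset (Fin n)) : ℝ :=
  bexpect (fun x => f x * chiB S x)

/-- `f` has degree at most `d`: all Fourier coefficients above level `d` vanish. -/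
def degLE {n : ℕ} (f : (Fin n → Bool) → ℝ) (d : ℕ) : Prop :=
  ∀ S : Finset (Fin n), d < S.card → fCoeff f S = 0

/-- `Var[f] = Σ_{S ≠ ∅} f̂(S)²`. -/
def totalVar {n : ℕ} (f : (Fin n → Bool) → ℝ) : ℝ :=
  ∑ S ∈ univ.filter (fun S : Finset (Fin n) => S ≠ ∅), (fCoeff f S) ^ 2

/-- `Inf_j[f] = Σ_{S ∋ j} f̂(S)²`. -/
def influence {n : ℕ} (f : (Fin n → Bool) → ℝ) (j : Fin n) : ℝ :=
  ∑ S ∈ univ.filter (fun S : Finset (Fin n) => j ∈ S), (fCoeff f S) ^ 2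

/-- The restriction `f_ρ` for `ρ = (S, y)`: alive coordinates from `z`, dead ones from `y`.
(The restricted function is encoded as a function on the full cube which only depends on
the coordinates in `S`.) -/
def restrictFn {n : ℕ} (f : (Fin n → Bool) → ℝ) (S : Finset (Fin n)) (y : Fin n → Bool) :
    (Fin n → Bool) → ℝ :=
  fun z => f (fun i => if i ∈ S then z i else y i)

/-- Probability that the alive set of a random restriction with survival probability `p`
equals `S`. -/
def aliveProb {n : ℕ} (p : ℝ) (S : Finset (Fin n)) : ℝ :=
  p ^ S.card * (1 - p) ^ (n - S.card)

/-- Expectation over a random restriction `ρ = (S, y)` with survival probability `p`: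
each coordinate is alive independently with probability `p`, and dead coordinates get
independent uniform bits.  (`y` is sampled as a full uniform point of the cube; its values
on alive coordinates are irrelevant whenever the integrand ignores them.) -/
def rexpect {n : ℕ} (p : ℝ) (G : Finset (Fin n) → (Fin n → Bool) → ℝ) : ℝ :=
  ∑ S : Finset (Fin n), aliveProb p S * bexpect (fun y => G S y)

open Classical in
/-- Probability of an event under a random restriction with survival probability `p`. -/
def rprob {n : ℕ} (p : ℝ) (E : Finset (Fin n) → (Fin n → Bool) → Prop) : ℝ :=
  rexpect p (fun S y => if E S y then 1 else 0)


section ChebMarkov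

open Polynomial Polynomial.Chebyshev Real

lemma T_natDegree_le' : ∀ m : ℕ, (T ℝ (m:ℤ)).natDegree ≤ m := by
  intro m
  induction m using Nat.strong_induction_on with
  | _ m ih =>
    match m with
    | 0 => simp [T_zero]
    | 1 => simp [T_one]
    | (k+2) =>
      have h1 := ih (k+1) (by omega)
      have h2 := ih k (by omega)
      rw [show ((k+2:ℕ):ℤ) = (k:ℤ)+2 by push_cast; ring, T_add_two]
      apply le_trans (natDegree_sub_le _ _)
      rw [show ((k:ℤ)+1) = ((k+1:ℕ):ℤ) by push_cast; ring]
      apply max_le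
      · apply le_trans (natDegree_mul_le)
        have : (2*X : ℝ[X]).natDegree ≤ 1 := by
          apply le_trans (natDegree_mul_le)
          simp
        omega
      · omega

lemma T_coeff_self : ∀ m : ℕ, (T ℝ ((m:ℤ)+1)).coeff (m+1) = 2^m := by
  intro m
  induction m using Nat.strong_induction_on with
  | _ m ih =>
    match m with
    | 0 => simp [T_one]
    | 1 =>
      rw [show ((1:ℕ):ℤ)+1 = 2 by norm_num, T_two]
      simp [coeff_sub, coeff_one, coeff_X_pow]
    | (k+2) =>
      have h1 := ih (k+1) (by omega)
      rw [show ((k+1:ℕ):ℤ)+1 = (k:ℤ)+1+1 by push_cast; ring] at h1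
      have hz : (T ℝ ((k:ℤ)+1)).coeff (k+3) = 0 := by
        apply coeff_eq_zero_of_natDegree_lt
        have := T_natDegree_le' (k+1)
        rw [show ((k+1:ℕ):ℤ) = (k:ℤ)+1 by push_cast; ring] at this
        omega
      rw [show ((k+2:ℕ):ℤ)+1 = (k:ℤ)+1+2 by push_cast; ring]
      rw [show (k+2)+1 = k+3 by ring]
      rw [T_add_two, coeff_sub]
      rw [mul_assoc, coeff_ofNat_mul]
      rw [show k+3 = (k+2)+1 by ring, coeff_X_mul]
      rw [show k+1+1 = k+2 by ring] at h1
      rw [show k+2+1 = k+3 by ring, h1, hz]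
      ring

lemma U_eval_one' : ∀ m : ℕ, (U ℝ (m:ℤ)).eval 1 = m + 1 := by
  intro m
  induction m using Nat.strong_induction_on with
  | _ m ih =>
    match m with
    | 0 => simp [U_zero]
    | 1 => simp [U_one]; norm_num
    | (k+2) =>
      have h1 := ih (k+1) (by omega)
      have h2 := ih k (by omega)
      rw [show ((k+2:ℕ):ℤ) = (k:ℤ)+2 by push_cast; ring, U_add_two]
      rw [show ((k:ℤ)+1) = ((k+1:ℕ):ℤ) by push_cast; ring]
      simp only [eval_sub, eval_mul, eval_ofNat, eval_X, h1, h2]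
      push_cast
      ring

lemma T_deriv_one (k : ℕ) : (derivative (T ℝ (k:ℤ))).eval 1 = (k:ℝ)^2 := by
  rw [T_derivative_eq_U]
  match k with
  | 0 => simp
  | (j+1) =>
    rw [show ((j+1:ℕ):ℤ) - 1 = ((j:ℕ):ℤ) by push_cast; ring]
    rw [eval_mul]
    rw [U_eval_one' j]
    push_cast
    simp
    ring

lemma cheb_expand : ∀ d : ℕ, ∀ p : ℝ[X], p.natDegree ≤ d →
    ∃ a : ℕ → ℝ, p = ∑ k ∈ Finset.range (d+1), C (a k) * T ℝ (k:ℤ) := by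
  intro d
  induction d with
  | zero =>
    intro p hp
    refine ⟨fun _ => p.coeff 0, ?_⟩
    rw [eq_C_of_natDegree_le_zero hp]
    simp [T_zero]
  | succ d ih =>
    intro p hp
    set c := p.coeff (d+1) / 2^d with hc
    have hq : (p - C c * T ℝ ((d:ℤ)+1)).natDegree ≤ d := by
      rw [natDegree_le_iff_coeff_eq_zero]
      intro N hN
      rw [coeff_sub, coeff_C_mul]
      rcases eq_or_lt_of_le (Nat.succ_le_of_lt hN) with h | h
      · rw [← h, T_coeff_self d, hc]
        field_simp
        ring
      · rw [coeff_eq_zero_of_natDegree_lt (lt_of_le_of_lt hp h),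
            coeff_eq_zero_of_natDegree_lt, mul_zero, sub_zero]
        have := T_natDegree_le' (d+1)
        rw [show ((d+1:ℕ):ℤ) = (d:ℤ)+1 by push_cast; ring] at this
        omega
    obtain ⟨a, ha⟩ := ih _ hq
    refine ⟨fun k => if k = d+1 then c else a k, ?_⟩
    rw [Finset.sum_range_succ]
    have h2 : ∑ k ∈ Finset.range (d+1), C (if k = d+1 then c else a k) * T ℝ (k:ℤ)
        = ∑ k ∈ Finset.range (d+1), C (a k) * T ℝ (k:ℤ) := by
      apply Finset.sum_congr rfl
      intro k hk
      rw [if_neg (by simp at hk; omega)]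
    rw [h2, ← ha]
    rw [show ((d+1:ℕ):ℤ) = (d:ℤ)+1 by push_cast; ring]
    simp only [if_pos rfl, if_true]
    ring

lemma eval_cos_expand (d : ℕ) (a : ℕ → ℝ) (θ : ℝ) :
    (∑ k ∈ Finset.range (d+1), C (a k) * T ℝ (k:ℤ)).eval (Real.cos θ)
      = ∑ k ∈ Finset.range (d+1), a k * Real.cos (k*θ) := by
  rw [eval_finset_sum]
  apply Finset.sum_congr rfl
  intro k _
  rw [eval_mul, eval_C, T_real_cos]
  norm_num

lemma int_cos_real (c : ℝ) (hc : c ≠ 0) :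
    ∫ θ in (0:ℝ)..π, Real.cos (c*θ) = Real.sin (c*π)/c := by
  rw [intervalIntegral.integral_comp_mul_left (fun x => Real.cos x) hc]
  simp [integral_cos]
  ring

lemma cos_orth (j k : ℕ) (hk : 1 ≤ k) :
    ∫ θ in (0:ℝ)..π, Real.cos (j*θ) * Real.cos (k*θ)
      = if j = k then π/2 else 0 := by
  have key : ∀ θ : ℝ, Real.cos (j*θ) * Real.cos (k*θ)
      = (Real.cos (((j:ℝ)+k)*θ) + Real.cos (((j:ℝ)-k)*θ))/2 := by
    intro θ
    have h1 : ((j:ℝ)+k)*θ = j*θ + k*θ := by ring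
    have h2 : ((j:ℝ)-k)*θ = j*θ - k*θ := by ring
    rw [h1, h2, Real.cos_add, Real.cos_sub]
    ring
  rw [intervalIntegral.integral_congr (fun θ _ => key θ)]
  have hcont : ∀ c : ℝ, IntervalIntegrable (fun θ => Real.cos (c*θ))
      MeasureTheory.volume (0:ℝ) π := by
    intro c
    exact (Real.continuous_cos.comp (continuous_const.mul continuous_id)).intervalIntegrable _ _
  rw [show (fun θ => (Real.cos (((j:ℝ)+k)*θ) + Real.cos (((j:ℝ)-k)*θ))/2)
      = (fun θ => (Real.cos (((j:ℝ)+k)*θ) + Real.cos (((j:ℝ)-k)*θ)) * (1/2)) by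
    funext θ; ring]
  rw [intervalIntegral.integral_mul_const, intervalIntegral.integral_add (hcont _) (hcont _)]
  have hjk : ((j:ℝ)+k) ≠ 0 := by
    have : (1:ℝ) ≤ (j:ℝ)+k := by
      have : (1:ℝ) ≤ (k:ℝ) := by exact_mod_cast hk
      have hj : (0:ℝ) ≤ (j:ℝ) := Nat.cast_nonneg j
      linarith
    linarith
  have e1 : ∫ θ in (0:ℝ)..π, Real.cos (((j:ℝ)+k)*θ) = 0 := by
    rw [int_cos_real _ hjk]
    rw [show ((j:ℝ)+k)*π = ((j+k:ℕ):ℝ)*π by push_cast; ring, Real.sin_nat_mul_pi]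
    simp
  rw [e1, zero_add]
  by_cases h : j = k
  · subst h
    simp only [sub_self, zero_mul, Real.cos_zero]
    simp
    ring
  · have hjk2 : ((j:ℝ)-k) ≠ 0 := by
      intro hc
      apply h
      have : (j:ℝ) = k := by linarith
      exact_mod_cast this
    rw [if_neg h, int_cos_real _ hjk2]
    rw [show ((j:ℝ)-k)*π = (((j:ℤ)-k:ℤ):ℝ)*π by push_cast; ring, Real.sin_int_mul_pi]
    simp

theorem markov_endpoint (d : ℕ) (p : ℝ[X]) (hd : p.natDegree ≤ d) (M : ℝ)
    (hb : ∀ x ∈ Set.Icc (-1:ℝ) 1, |p.eval x| ≤ M) :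
    |(derivative p).eval 1| ≤ 2 * d^3 * M := by
  obtain ⟨a, ha⟩ := cheb_expand d p hd
  have hM : 0 ≤ M := le_trans (abs_nonneg _) (hb 1 (by norm_num))
  have hak : ∀ k, 1 ≤ k → k ≤ d → |a k| ≤ 2*M := by
    intro k hk1 hkd
    have hint : ∫ θ in (0:ℝ)..π, (p.eval (Real.cos θ)) * Real.cos (k*θ)
        = a k * (π/2) := by
      have hpt : ∀ θ:ℝ, p.eval (Real.cos θ) * Real.cos (k*θ)
          = ∑ j ∈ Finset.range (d+1), a j * (Real.cos (j*θ) * Real.cos (k*θ)) := by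
        intro θ
        rw [ha, eval_cos_expand, Finset.sum_mul]
        apply Finset.sum_congr rfl
        intros; ring
      rw [intervalIntegral.integral_congr (fun θ _ => hpt θ)]
      rw [intervalIntegral.integral_finset_sum]
      · have e : ∀ j ∈ Finset.range (d+1),
            (∫ θ in (0:ℝ)..π, a j * (Real.cos (j*θ) * Real.cos (k*θ)))
              = a j * (if j = k then π/2 else 0) := by
          intro j _
          rw [intervalIntegral.integral_const_mul, cos_orth j k hk1]
        rw [Finset.sum_congr rfl e]
        rw [Finset.sum_eq_single k]
        · simp
        · intro j _ hj; rw [if_neg hj, mul_zero]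
        · intro hk; exact absurd (Finset.mem_range.mpr (by omega)) hk
      · intro j _
        exact (continuous_const.mul ((Real.continuous_cos.comp
          (continuous_const.mul continuous_id)).mul (Real.continuous_cos.comp
          (continuous_const.mul continuous_id)))).intervalIntegrable _ _
    have hbound : ‖∫ θ in (0:ℝ)..π, (p.eval (Real.cos θ)) * Real.cos (k*θ)‖ ≤ M * |π - 0| := by
      apply intervalIntegral.norm_integral_le_of_norm_le_const
      intro x _
      rw [Real.norm_eq_abs, abs_mul]
      have h1 : |p.eval (Real.cos x)| ≤ M := by
        apply hb
        exact ⟨Real.neg_one_le_cos x, Real.cos_le_one x⟩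
      have h2 : |Real.cos ((k:ℝ)*x)| ≤ 1 := Real.abs_cos_le_one _
      nlinarith [abs_nonneg (p.eval (Real.cos x)), abs_nonneg (Real.cos ((k:ℝ)*x))]
    rw [Real.norm_eq_abs, hint] at hbound
    rw [abs_mul, abs_of_pos (by positivity : (0:ℝ) < π/2)] at hbound
    rw [sub_zero, abs_of_pos Real.pi_pos] at hbound
    nlinarith [Real.pi_pos]
  have hder : (derivative p).eval 1 = ∑ k ∈ Finset.range (d+1), a k * (k:ℝ)^2 := by
    rw [ha, derivative_sum, eval_finset_sum]
    apply Finset.sum_congr rfl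
    intro k _
    rw [derivative_C_mul, eval_mul, eval_C, T_deriv_one]
  rw [hder]
  calc |∑ k ∈ Finset.range (d+1), a k * (k:ℝ)^2|
      ≤ ∑ k ∈ Finset.range (d+1), |a k * (k:ℝ)^2| := Finset.abs_sum_le_sum_abs _ _
    _ = ∑ k ∈ Finset.range d, |a (k+1) * ((k+1:ℕ):ℝ)^2| + |a 0 * ((0:ℕ):ℝ)^2| :=
        Finset.sum_range_succ' _ d
    _ ≤ ∑ k ∈ Finset.range d, 2*M*(d:ℝ)^2 + 0 := by
        apply add_le_add
        · apply Finset.sum_le_sum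
          intro k hk
          have hkd : k + 1 ≤ d := Finset.mem_range.mp hk
          have h1 := hak (k+1) (by omega) hkd
          rw [abs_mul]
          have h2 : |((k+1:ℕ):ℝ)^2| ≤ (d:ℝ)^2 := by
            rw [abs_of_nonneg (by positivity)]
            have : ((k+1:ℕ):ℝ) ≤ (d:ℝ) := by exact_mod_cast hkd
            nlinarith [Nat.cast_nonneg (α := ℝ) (k+1)]
          nlinarith [abs_nonneg (a (k+1)), abs_nonneg (((k+1:ℕ):ℝ)^2),
            sq_nonneg ((d:ℝ))]
        · simp
    _ ≤ 2 * d^3 * M := by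
        rw [Finset.sum_const, add_zero, nsmul_eq_mul, Finset.card_range]
        have : (0:ℝ) ≤ d := Nat.cast_nonneg d
        nlinarith

end ChebMarkov

-- Part A : Fourier basics

lemma sgnB_mul_self (b : Bool) : sgnB b * sgnB b = 1 := by cases b <;> simp [sgnB]

lemma sgnB_ne (a b : Bool) (h : a ≠ b) : sgnB a * sgnB b = -1 := by
  cases a <;> cases b <;> simp_all [sgnB]

lemma sum_chi_mul {n : ℕ} (x y : Fin n → Bool) :
    ∑ S : Finset (Fin n), chiB S x * chiB S y
      = ∏ i : Fin n, (sgnB (x i) * sgnB (y i) + 1) := by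
  rw [Finset.prod_add]
  rw [Finset.powerset_univ]
  apply Finset.sum_congr rfl
  intro S _
  simp [chiB, Finset.prod_mul_distrib]

lemma sum_chi_mul_eq {n : ℕ} (x y : Fin n → Bool) :
    ∑ S : Finset (Fin n), chiB S x * chiB S y = if x = y then (2:ℝ)^n else 0 := by
  rw [sum_chi_mul]
  by_cases h : x = y
  · subst h
    simp [sgnB_mul_self]
    norm_num
  · simp only [if_neg h]
    obtain ⟨i, hi⟩ : ∃ i, x i ≠ y i := by
      by_contra hc
      push_neg at hc
      exact h (funext hc)
    apply Finset.prod_eq_zero (Finset.mem_univ i)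
    rw [sgnB_ne _ _ hi]; ring

lemma inversion {n : ℕ} (f : (Fin n → Bool) → ℝ) (x : Fin n → Bool) :
    ∑ S : Finset (Fin n), fCoeff f S * chiB S x = f x := by
  have h2 : ((2:ℝ)^n) ≠ 0 := by positivity
  simp only [fCoeff, bexpect, div_mul_eq_mul_div, Finset.sum_div, Finset.sum_mul]
  rw [Finset.sum_comm]
  have : ∀ y : Fin n → Bool,
      ∑ S : Finset (Fin n), f y * chiB S y * chiB S x / 2^n
        = (if y = x then f y else 0) := by
    intro y
    rw [← Finset.sum_div]
    have : ∑ S : Finset (Fin n), f y * chiB S y * chiB S x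
        = f y * ∑ S : Finset (Fin n), chiB S y * chiB S x := by
      rw [Finset.mul_sum]; apply Finset.sum_congr rfl; intros; ring
    rw [this, sum_chi_mul_eq]
    by_cases h : y = x <;> simp [h, h2]
  rw [Finset.sum_congr rfl fun y _ => this y]
  simp

lemma parseval {n : ℕ} (f : (Fin n → Bool) → ℝ) :
    ∑ S : Finset (Fin n), (fCoeff f S)^2 = bexpect (fun x => (f x)^2) := by
  have : ∀ S : Finset (Fin n), (fCoeff f S)^2 = fCoeff f S * fCoeff f S := fun S => sq (fCoeff f S)
  simp only [this]
  have rw1 : ∀ S : Finset (Fin n), fCoeff f S * fCoeff f S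
      = (∑ x : Fin n → Bool, fCoeff f S * (f x * chiB S x)) / 2^n := by
    intro S
    rw [← Finset.mul_sum]
    rw [fCoeff, bexpect, mul_div_assoc']
  rw [Finset.sum_congr rfl fun S _ => rw1 S]
  rw [← Finset.sum_div]
  rw [Finset.sum_comm]
  have : ∀ x : Fin n → Bool,
      ∑ S : Finset (Fin n), fCoeff f S * (f x * chiB S x) = f x * f x := by
    intro x
    have := inversion f x
    calc ∑ S : Finset (Fin n), fCoeff f S * (f x * chiB S x)
        = f x * ∑ S : Finset (Fin n), fCoeff f S * chiB S x := by
          rw [Finset.mul_sum]; apply Finset.sum_congr rfl; intros; ring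
      _ = f x * f x := by rw [this]
  rw [Finset.sum_congr rfl fun x _ => this x]
  simp only [bexpect, sq]

-- flip machinery
def bflip {n : ℕ} (i : Fin n) (x : Fin n → Bool) : Fin n → Bool := Function.update x i (!(x i))

lemma sgnB_not (b : Bool) : sgnB (!b) = - sgnB b := by cases b <;> simp [sgnB]

lemma bflip_invol {n : ℕ} (i : Fin n) : Function.Involutive (bflip (n := n) i) := by
  intro x
  funext j
  by_cases h : j = i
  · subst h; simp [bflip]
  · simp [bflip, Function.update_of_ne h]

lemma chiB_bflip {n : ℕ} (S : Finset (Fin n)) (i : Fin n) (x : Fin n → Bool) :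
    chiB S (bflip i x) = (if i ∈ S then (-1:ℝ) else 1) * chiB S x := by
  by_cases hi : i ∈ S
  · rw [if_pos hi, chiB, chiB, ← Finset.mul_prod_erase _ _ hi, ← Finset.mul_prod_erase _ _ hi]
    have h1 : sgnB (bflip i x i) = - sgnB (x i) := by simp [bflip, sgnB_not]
    have h2 : ∀ j ∈ S.erase i, sgnB (bflip i x j) = sgnB (x j) := by
      intro j hj
      have := Finset.ne_of_mem_erase hj
      simp [bflip, Function.update_of_ne this]
    rw [Finset.prod_congr rfl h2, h1]; ring
  · rw [if_neg hi, one_mul, chiB, chiB]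
    apply Finset.prod_congr rfl
    intro j hj
    have : j ≠ i := fun h => hi (h ▸ hj)
    simp [bflip, Function.update_of_ne this]

lemma fCoeff_comp_bflip {n : ℕ} (f : (Fin n → Bool) → ℝ) (i : Fin n) (S : Finset (Fin n)) :
    fCoeff (fun x => f (bflip i x)) S = (if i ∈ S then (-1:ℝ) else 1) * fCoeff f S := by
  simp only [fCoeff, bexpect]
  have e : ∑ x : Fin n → Bool, f (bflip i x) * chiB S x
      = ∑ x : Fin n → Bool, f x * chiB S (bflip i x) := by
    apply Fintype.sum_equiv ((bflip_invol i).toPerm)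
    intro x
    simp [Function.Involutive.toPerm, bflip_invol i x]
  rw [e]
  have : ∀ x, f x * chiB S (bflip i x) = (if i ∈ S then (-1:ℝ) else 1) * (f x * chiB S x) := by
    intro x; rw [chiB_bflip]; ring
  rw [Finset.sum_congr rfl fun x _ => this x, ← Finset.mul_sum, mul_div_assoc]

lemma fCoeff_sub {n : ℕ} (f g : (Fin n → Bool) → ℝ) (S : Finset (Fin n)) :
    fCoeff (fun x => f x - g x) S = fCoeff f S - fCoeff g S := by
  simp only [fCoeff, bexpect, sub_mul, Finset.sum_sub_distrib, sub_div]

lemma fCoeff_diff {n : ℕ} (f : (Fin n → Bool) → ℝ) (i : Fin n) (S : Finset (Fin n)) :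
    fCoeff (fun x => f x - f (bflip i x)) S = if i ∈ S then 2 * fCoeff f S else 0 := by
  rw [fCoeff_sub f (fun x => f (bflip i x)) S, fCoeff_comp_bflip]
  by_cases hi : i ∈ S <;> simp [hi] <;> ring

lemma influence_eq {n : ℕ} (f : (Fin n → Bool) → ℝ) (i : Fin n) :
    4 * influence f i = bexpect (fun x => (f x - f (bflip i x))^2) := by
  have hp := parseval (fun x => f x - f (bflip i x))
  have : ∀ S : Finset (Fin n), (fCoeff (fun x => f x - f (bflip i x)) S)^2
      = if i ∈ S then 4 * (fCoeff f S)^2 else 0 := by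
    intro S
    rw [fCoeff_diff]
    by_cases hi : i ∈ S <;> simp [hi] <;> ring
  rw [Finset.sum_congr rfl fun S _ => this S] at hp
  rw [Finset.sum_ite, Finset.sum_const_zero, add_zero, ← Finset.mul_sum] at hp
  rw [← hp, influence]

lemma totalVar_le_sum_influence {n : ℕ} (f : (Fin n → Bool) → ℝ) :
    totalVar f ≤ ∑ i : Fin n, influence f i := by
  have : ∑ i : Fin n, influence f i
      = ∑ S : Finset (Fin n), (S.card : ℝ) * (fCoeff f S)^2 := by
    simp only [influence, Finset.sum_filter]
    rw [Finset.sum_comm]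
    apply Finset.sum_congr rfl
    intro S _
    rw [Finset.sum_ite_mem, Finset.univ_inter, Finset.sum_const, nsmul_eq_mul]
  rw [this, totalVar]
  rw [Finset.sum_filter]
  apply Finset.sum_le_sum
  intro S _
  by_cases hS : S = ∅
  · simp [hS]
  · rw [if_pos hS]
    have : (1:ℝ) ≤ S.card := by
      have := Finset.card_pos.mpr (Finset.nonempty_of_ne_empty hS)
      exact_mod_cast this
    nlinarith [sq_nonneg (fCoeff f S)]

lemma totalVar_le_one {n : ℕ} (f : (Fin n → Bool) → ℝ) (hf : ∀ x, f x ∈ Set.Icc (0:ℝ) 1) :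
    totalVar f ≤ 1 := by
  have h1 : totalVar f ≤ ∑ S : Finset (Fin n), (fCoeff f S)^2 := by
    apply Finset.sum_le_sum_of_subset_of_nonneg (Finset.filter_subset _ _)
    intros; positivity
  have h2 := parseval f
  have h3 : bexpect (fun x => (f x)^2) ≤ 1 := by
    rw [bexpect, div_le_one (by positivity)]
    calc ∑ x : Fin n → Bool, (f x)^2 ≤ ∑ x : Fin n → Bool, 1 := by
          apply Finset.sum_le_sum
          intro x _
          obtain ⟨h0, hx1⟩ := hf x
          nlinarith
      _ = (2:ℝ)^n := by simp
  linarith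

section PartC

open Polynomial

variable {n : ℕ}

/-- Linear factor `sgn(x i) - sgn(x i) w i · X`. -/
def linFac (x : Fin n → Bool) (w : Fin n → ℝ) (i : Fin n) : ℝ[X] :=
  C (sgnB (x i)) - C (sgnB (x i) * w i) * X

/-- The multilinear extension of `f` along the segment `t ↦ (sgn(x i)(1 - w i t))_i`. -/
def extPoly (f : (Fin n → Bool) → ℝ) (x : Fin n → Bool) (w : Fin n → ℝ) : ℝ[X] :=
  ∑ S : Finset (Fin n), C (fCoeff f S) * ∏ i ∈ S, linFac x w i

lemma linFac_natDegree_le (x : Fin n → Bool) (w : Fin n → ℝ) (i : Fin n) :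
    (linFac x w i).natDegree ≤ 1 := by
  apply le_trans (natDegree_sub_le _ _)
  apply max_le
  · simp
  · apply le_trans (natDegree_C_mul_le _ _)
    exact natDegree_X_le

lemma extPoly_natDegree_le {f : (Fin n → Bool) → ℝ} {d : ℕ} (hdeg : degLE f d)
    (x : Fin n → Bool) (w : Fin n → ℝ) : (extPoly f x w).natDegree ≤ d := by
  apply natDegree_sum_le_of_forall_le
  intro S _
  by_cases hS : S.card ≤ d
  · apply le_trans natDegree_mul_le
    rw [natDegree_C, zero_add]
    apply le_trans (natDegree_prod_le _ _)
    calc ∑ i ∈ S, (linFac x w i).natDegree ≤ ∑ i ∈ S, 1 :=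
          Finset.sum_le_sum (fun i _ => linFac_natDegree_le x w i)
      _ = S.card := by simp
      _ ≤ d := hS
  · rw [hdeg S (by omega), map_zero, zero_mul, natDegree_zero]
    omega

lemma extPoly_eval (f : (Fin n → Bool) → ℝ) (x : Fin n → Bool) (w : Fin n → ℝ) (t : ℝ) :
    (extPoly f x w).eval t
      = ∑ S : Finset (Fin n), fCoeff f S * ∏ i ∈ S, (sgnB (x i) * (1 - w i * t)) := by
  rw [extPoly, eval_finset_sum]
  apply Finset.sum_congr rfl
  intro S _
  rw [eval_mul, eval_C, eval_prod]
  congr 1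
  apply Finset.prod_congr rfl
  intro i _
  rw [linFac, eval_sub, eval_C, eval_mul, eval_C, eval_X]
  ring

lemma weight_repr (f : (Fin n → Bool) → ℝ) (y : Fin n → ℝ) :
    ∑ S : Finset (Fin n), fCoeff f S * ∏ i ∈ S, y i
      = ∑ z : Fin n → Bool, f z * ∏ i : Fin n, ((1 + y i * sgnB (z i))/2) := by
  have hrhs : ∀ z : Fin n → Bool,
      (∏ i : Fin n, ((1 + y i * sgnB (z i))/2))
        = (∑ S : Finset (Fin n), (∏ i ∈ S, y i) * chiB S z) / 2^n := by
    intro z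
    rw [Finset.prod_div_distrib, Finset.prod_const]
    congr 1
    · rw [Finset.prod_congr rfl (fun i (_ : i ∈ Finset.univ) =>
        add_comm 1 (y i * sgnB (z i)))]
      rw [Finset.prod_add, Finset.powerset_univ]
      apply Finset.sum_congr rfl
      intro S _
      rw [Finset.prod_const_one, mul_one, chiB, ← Finset.prod_mul_distrib]
    · simp [Finset.card_univ]
  have step1 : ∀ z : Fin n → Bool,
      f z * ((∑ S : Finset (Fin n), (∏ i ∈ S, y i) * chiB S z) / 2^n)
        = ∑ S : Finset (Fin n), (∏ i ∈ S, y i) * (f z * chiB S z) / 2^n := by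
    intro z
    rw [mul_div_assoc', Finset.mul_sum, ← Finset.sum_div]
    congr 1
    apply Finset.sum_congr rfl
    intros; ring
  symm
  calc ∑ z : Fin n → Bool, f z * ∏ i : Fin n, ((1 + y i * sgnB (z i))/2)
      = ∑ z : Fin n → Bool, ∑ S : Finset (Fin n),
          (∏ i ∈ S, y i) * (f z * chiB S z) / 2^n := by
        apply Finset.sum_congr rfl
        intro z _
        rw [hrhs z]
        exact step1 z
    _ = ∑ S : Finset (Fin n), ∑ z : Fin n → Bool,
          (∏ i ∈ S, y i) * (f z * chiB S z) / 2^n := Finset.sum_comm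
    _ = ∑ S : Finset (Fin n), fCoeff f S * ∏ i ∈ S, y i := by
        apply Finset.sum_congr rfl
        intro S _
        rw [← Finset.sum_div, ← Finset.mul_sum, fCoeff, bexpect, mul_div_assoc]
        ring

lemma sgnB_abs (b : Bool) : |sgnB b| = 1 := by cases b <;> simp [sgnB]

lemma extPoly_eval_mem {f : (Fin n → Bool) → ℝ} (hf : ∀ z, f z ∈ Set.Icc (0:ℝ) 1)
    (x : Fin n → Bool) {w : Fin n → ℝ} (hw : ∀ i, w i ∈ Set.Icc (0:ℝ) 1)
    {t : ℝ} (ht : t ∈ Set.Icc (0:ℝ) 2) :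
    (extPoly f x w).eval t ∈ Set.Icc (0:ℝ) 1 := by
  rw [extPoly_eval, weight_repr f (fun i => sgnB (x i) * (1 - w i * t))]
  set y : Fin n → ℝ := fun i => sgnB (x i) * (1 - w i * t) with hy
  have hyb : ∀ i, |y i| ≤ 1 := by
    intro i
    rw [hy, abs_mul, sgnB_abs, one_mul, abs_le]
    obtain ⟨hw0, hw1⟩ := hw i
    obtain ⟨ht0, ht2⟩ := ht
    constructor <;> nlinarith
  have hfac : ∀ z : Fin n → Bool, ∀ i : Fin n,
      (0:ℝ) ≤ (1 + y i * sgnB (z i))/2 ∧ (1 + y i * sgnB (z i))/2 ≤ 1 := by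
    intro z i
    have h3 : |y i * sgnB (z i)| ≤ 1 := by
      rw [abs_mul, sgnB_abs, mul_one]; exact hyb i
    rw [abs_le] at h3
    constructor <;> [linarith [h3.1]; linarith [h3.2]]
  have hweight_nonneg : ∀ z : Fin n → Bool,
      (0:ℝ) ≤ ∏ i : Fin n, ((1 + y i * sgnB (z i))/2) :=
    fun z => Finset.prod_nonneg (fun i _ => (hfac z i).1)
  have hsum : ∑ z : Fin n → Bool, ∏ i : Fin n, ((1 + y i * sgnB (z i))/2) = 1 := by
    rw [← Fintype.piFinset_univ,
      ← Finset.prod_univ_sum (t := fun _ : Fin n => (Finset.univ : Finset Bool))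
        (f := fun i b => (1 + y i * sgnB b)/2)]
    rw [Finset.prod_congr rfl (fun i (_ : i ∈ Finset.univ) => ?_), Finset.prod_const_one]
    rw [show ∑ b ∈ (Finset.univ : Finset Bool), (1 + y i * sgnB b)/2
        = (1 + y i * sgnB true)/2 + (1 + y i * sgnB false)/2 from Fintype.sum_bool _]
    simp [sgnB]
    ring
  constructor
  · apply Finset.sum_nonneg
    intro z _
    exact mul_nonneg (hf z).1 (hweight_nonneg z)
  · calc ∑ z : Fin n → Bool, f z * ∏ i : Fin n, ((1 + y i * sgnB (z i))/2)
        ≤ ∑ z : Fin n → Bool, ∏ i : Fin n, ((1 + y i * sgnB (z i))/2) := by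
          apply Finset.sum_le_sum
          intro z _
          have := hweight_nonneg z
          nlinarith [(hf z).2]
      _ = 1 := hsum

lemma derivative_finset_prod {ι : Type*} [DecidableEq ι] (s : Finset ι) (f : ι → ℝ[X]) :
    derivative (∏ i ∈ s, f i) = ∑ i ∈ s, (∏ j ∈ s.erase i, f j) * derivative (f i) := by
  induction s using Finset.induction_on with
  | empty => simp
  | @insert a s ha ih =>
    have hsum : ∑ i ∈ s, (∏ j ∈ (insert a s).erase i, f j) * derivative (f i)
        = ∑ i ∈ s, f a * ((∏ j ∈ s.erase i, f j) * derivative (f i)) := by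
      apply Finset.sum_congr rfl
      intro i hi
      have hia : i ≠ a := fun hh => ha (hh ▸ hi)
      rw [Finset.erase_insert_of_ne hia.symm,
        Finset.prod_insert (fun hh => ha (Finset.mem_of_mem_erase hh))]
      ring
    rw [Finset.prod_insert ha, derivative_mul, ih, Finset.sum_insert ha,
      Finset.erase_insert ha, hsum, Finset.mul_sum]
    ring

lemma sum_mem_coeff (f : (Fin n → Bool) → ℝ) (i : Fin n) (x : Fin n → Bool) :
    ∑ S ∈ Finset.univ.filter (fun S : Finset (Fin n) => i ∈ S), fCoeff f S * chiB S x
      = (f x - f (bflip i x))/2 := by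
  have h1 := inversion f x
  have h2 : f (bflip i x) = ∑ S : Finset (Fin n),
      fCoeff f S * ((if i ∈ S then (-1:ℝ) else 1) * chiB S x) := by
    rw [← inversion f (bflip i x)]
    apply Finset.sum_congr rfl
    intro S _
    rw [chiB_bflip]
  have key : ∑ S : Finset (Fin n), (if i ∈ S then (2:ℝ) * (fCoeff f S * chiB S x) else 0)
      = f x - f (bflip i x) := by
    rw [← h1, h2, ← Finset.sum_sub_distrib]
    apply Finset.sum_congr rfl
    intro S _
    by_cases hS : i ∈ S <;> simp [hS] <;> ring
  have expand : ∑ S : Finset (Fin n), (if i ∈ S then (2:ℝ) * (fCoeff f S * chiB S x) else 0)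
      = 2 * ∑ S ∈ Finset.univ.filter (fun S : Finset (Fin n) => i ∈ S),
          fCoeff f S * chiB S x := by
    rw [Finset.sum_filter, Finset.mul_sum]
    apply Finset.sum_congr rfl
    intro S _
    by_cases hS : i ∈ S <;> simp [hS]
  rw [expand] at key
  linarith

lemma extPoly_deriv_zero (f : (Fin n → Bool) → ℝ) (x : Fin n → Bool) (w : Fin n → ℝ) :
    (Polynomial.derivative (extPoly f x w)).eval 0
      = - ∑ i : Fin n, w i * ((f x - f (bflip i x))/2) := by
  rw [extPoly, derivative_sum, eval_finset_sum]
  have hterm : ∀ S : Finset (Fin n),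
      (derivative (C (fCoeff f S) * ∏ i ∈ S, linFac x w i)).eval 0
        = fCoeff f S * ∑ i ∈ S, (-(sgnB (x i) * w i)) * ∏ j ∈ S.erase i, sgnB (x j) := by
    intro S
    rw [derivative_C_mul, eval_mul, eval_C, derivative_finset_prod, eval_finset_sum]
    congr 1
    apply Finset.sum_congr rfl
    intro i hi
    rw [eval_mul]
    have e1 : (derivative (linFac x w i)).eval 0 = -(sgnB (x i) * w i) := by
      rw [linFac, derivative_sub, derivative_C, derivative_C_mul, derivative_X, mul_one]
      simp
    have e2 : (∏ j ∈ S.erase i, linFac x w j).eval 0 = ∏ j ∈ S.erase i, sgnB (x j) := by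
      rw [eval_prod]
      apply Finset.prod_congr rfl
      intro j _
      rw [linFac]
      simp
    rw [e1, e2]
    ring
  rw [Finset.sum_congr rfl fun S _ => hterm S]
  have inner : ∀ S : Finset (Fin n),
      fCoeff f S * ∑ i ∈ S, (-(sgnB (x i) * w i)) * ∏ j ∈ S.erase i, sgnB (x j)
        = ∑ i : Fin n, (if i ∈ S then (- w i) * (fCoeff f S * chiB S x) else 0) := by
    intro S
    rw [Finset.sum_ite_mem, Finset.univ_inter, Finset.mul_sum]
    apply Finset.sum_congr rfl
    intro i hi
    have : sgnB (x i) * ∏ j ∈ S.erase i, sgnB (x j) = chiB S x :=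
      Finset.mul_prod_erase S (fun j => sgnB (x j)) hi
    rw [← this]
    have hsq : sgnB (x i) * sgnB (x i) = 1 := sgnB_mul_self (x i)
    nlinarith [hsq]
  rw [Finset.sum_congr rfl fun S _ => inner S, Finset.sum_comm]
  have outer : ∀ i : Fin n,
      ∑ S : Finset (Fin n), (if i ∈ S then (- w i) * (fCoeff f S * chiB S x) else 0)
        = - (w i * ((f x - f (bflip i x))/2)) := by
    intro i
    rw [← Finset.sum_filter, ← Finset.mul_sum, sum_mem_coeff]
    ring
  rw [Finset.sum_congr rfl fun i _ => outer i, ← Finset.sum_neg_distrib]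

end PartC

lemma weighted_sum_bound {n : ℕ} {f : (Fin n → Bool) → ℝ} {d : ℕ} (hdeg : degLE f d)
    (hf : ∀ z, f z ∈ Set.Icc (0:ℝ) 1) (x : Fin n → Bool)
    {w : Fin n → ℝ} (hw : ∀ i, w i ∈ Set.Icc (0:ℝ) 1) :
    |∑ i : Fin n, w i * (f x - f (bflip i x))| ≤ 4 * (d:ℝ)^3 := by
  set P := extPoly f x w with hP
  set Q := P.comp (1 - Polynomial.X) with hQ
  have hQdeg : Q.natDegree ≤ d := by
    apply le_trans (Polynomial.natDegree_comp_le)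
    have h1 : (1 - Polynomial.X : Polynomial ℝ).natDegree ≤ 1 := by
      apply le_trans (Polynomial.natDegree_sub_le _ _)
      simp
    have h2 := extPoly_natDegree_le hdeg x w
    calc P.natDegree * (1 - Polynomial.X : Polynomial ℝ).natDegree
        ≤ d * 1 := Nat.mul_le_mul h2 h1
      _ = d := mul_one d
  have hQb : ∀ u ∈ Set.Icc (-1:ℝ) 1, |Q.eval u| ≤ 1 := by
    intro u hu
    rw [hQ, Polynomial.eval_comp]
    have he : (1 - Polynomial.X : Polynomial ℝ).eval u = 1 - u := by simp
    rw [he]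
    have hmem := extPoly_eval_mem hf x hw (t := 1 - u)
      ⟨by linarith [hu.2], by linarith [hu.1]⟩
    rw [abs_le]
    exact ⟨by linarith [hmem.1], hmem.2⟩
  have hm := markov_endpoint d Q hQdeg 1 hQb
  have hQd : (Polynomial.derivative Q).eval 1 = - (Polynomial.derivative P).eval 0 := by
    rw [hQ, Polynomial.derivative_comp, Polynomial.eval_mul, Polynomial.eval_comp]
    simp
  rw [hQd, abs_neg, extPoly_deriv_zero, abs_neg] at hm
  have hsplit : ∑ i : Fin n, w i * (f x - f (bflip i x))
      = 2 * ∑ i : Fin n, w i * ((f x - f (bflip i x))/2) := by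
    rw [Finset.mul_sum]
    apply Finset.sum_congr rfl
    intros; ring
  rw [hsplit, abs_mul, abs_of_nonneg (by norm_num : (0:ℝ) ≤ 2)]
  nlinarith [abs_nonneg (∑ i : Fin n, w i * ((f x - f (bflip i x))/2))]

lemma sum_abs_delta_le {n : ℕ} {f : (Fin n → Bool) → ℝ} {d : ℕ} (hdeg : degLE f d)
    (hf : ∀ z, f z ∈ Set.Icc (0:ℝ) 1) (x : Fin n → Bool) :
    ∑ i : Fin n, |f x - f (bflip i x)| ≤ 8 * (d:ℝ)^3 := by
  classical
  have h1 := weighted_sum_bound hdeg hf x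
    (w := fun i => if 0 ≤ f x - f (bflip i x) then (1:ℝ) else 0)
    (fun i => by by_cases h : 0 ≤ f x - f (bflip i x) <;> simp [h])
  have h2 := weighted_sum_bound hdeg hf x
    (w := fun i => if 0 ≤ f x - f (bflip i x) then (0:ℝ) else 1)
    (fun i => by by_cases h : 0 ≤ f x - f (bflip i x) <;> simp [h])
  have key : ∑ i : Fin n, |f x - f (bflip i x)|
      = ∑ i : Fin n, (if 0 ≤ f x - f (bflip i x) then (1:ℝ) else 0) * (f x - f (bflip i x))
        - ∑ i : Fin n, (if 0 ≤ f x - f (bflip i x) then (0:ℝ) else 1) * (f x - f (bflip i x)) := by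
    rw [← Finset.sum_sub_distrib]
    apply Finset.sum_congr rfl
    intro i _
    by_cases h : 0 ≤ f x - f (bflip i x)
    · rw [if_pos h, if_pos h, abs_of_nonneg h]; ring
    · push_neg at h
      rw [if_neg (not_le.mpr h), if_neg (not_le.mpr h), abs_of_neg h]; ring
  rw [key]
  have ha1 := abs_le.mp h1
  have ha2 := abs_le.mp h2
  linarith [ha1.1, ha1.2, ha2.1, ha2.2]

set_option maxHeartbeats 2000000 in
open Classical in
/-- many inputs have a sensitive coordinate. -/
theorem many_sensitive_inputs :
    ∃ C > (0:ℝ), ∃ d₀ : ℕ, ∀ d : ℕ, d₀ ≤ d → 2 ≤ d →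
      ∀ (n : ℕ) (f : (Fin n → Bool) → ℝ),
        (∀ x, f x ∈ Set.Icc (0:ℝ) 1) →
        degLE f d →
        1 / (d : ℝ) ≤ totalVar f →
        ((univ.filter (fun x : Fin n → Bool =>
              ∃ i : Fin n, totalVar f / (d : ℝ) ^ C ≤
                |f x - f (Function.update x i (!(x i)))|)).card : ℝ) / 2 ^ n
          ≥ totalVar f ^ 3 / (d : ℝ) ^ C := by
  refine ⟨10, by norm_num, 2, ?_⟩
  intro d _ hd2 n f hf hdeg hvar
  have hbf : ∀ (x : Fin n → Bool) (i : Fin n),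
      Function.update x i (!(x i)) = bflip i x := fun _ _ => rfl
  have hpow : (d:ℝ) ^ (10:ℝ) = (d:ℝ)^(10:ℕ) := by
    rw [show (10:ℝ) = ((10:ℕ):ℝ) by norm_num, Real.rpow_natCast]
  simp only [hbf, hpow]
  rw [ge_iff_le]
  set V := totalVar f with hV
  have hd2R : (2:ℝ) ≤ (d:ℝ) := by exact_mod_cast hd2
  have hdpos : (0:ℝ) < d := by linarith
  have hVpos : 0 < V := lt_of_lt_of_le (by positivity) hvar
  have hV1 : V ≤ 1 := totalVar_le_one f hf
  set K : ℝ := (d:ℝ)^(3:ℕ) with hK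
  have hKpos : 0 < K := by positivity
  set ε : ℝ := V / (d:ℝ)^(10:ℕ) with hε
  have hεpos : 0 < ε := by positivity
  have hd10 : 8 * K ≤ (d:ℝ)^(10:ℕ) := by
    have h7 : (2:ℝ)^(7:ℕ) ≤ (d:ℝ)^(7:ℕ) := pow_le_pow_left₀ (by norm_num) hd2R 7
    have : (d:ℝ)^(10:ℕ) = (d:ℝ)^(3:ℕ) * (d:ℝ)^(7:ℕ) := by ring
    rw [this, hK]
    nlinarith [pow_pos hdpos 3]
  have hε8K : ε * (8*K) ≤ V := by
    rw [hε]
    rw [div_mul_eq_mul_div, div_le_iff₀ (by positivity)]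
    nlinarith
  set B := univ.filter (fun x : Fin n → Bool =>
      ∃ i : Fin n, ε ≤ |f x - f (bflip i x)|) with hB
  -- pointwise bound
  have habs1 : ∀ (x : Fin n → Bool) (i : Fin n), |f x - f (bflip i x)| ≤ 1 := by
    intro x i
    obtain ⟨h1, h2⟩ := hf x
    obtain ⟨h3, h4⟩ := hf (bflip i x)
    rw [abs_le]
    constructor <;> linarith
  have hpoint : ∀ x : Fin n → Bool,
      ∑ i : Fin n, (f x - f (bflip i x))^2
        ≤ (if x ∈ B then (8*K - ε*(8*K)) else 0) + ε*(8*K) := by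
    intro x
    by_cases hx : x ∈ B
    · rw [if_pos hx]
      have step : ∑ i : Fin n, (f x - f (bflip i x))^2
          ≤ ∑ i : Fin n, |f x - f (bflip i x)| := by
        apply Finset.sum_le_sum
        intro i _
        have := habs1 x i
        have habs0 := abs_nonneg (f x - f (bflip i x))
        nlinarith [sq_abs (f x - f (bflip i x))]
      have := sum_abs_delta_le hdeg hf x
      rw [← hK] at this
      linarith
    · rw [if_neg hx, zero_add]
      have hsmall : ∀ i : Fin n, |f x - f (bflip i x)| < ε := by
        intro i
        by_contra hcon
        push_neg at hcon
        exact hx (Finset.mem_filter.mpr ⟨Finset.mem_univ _, ⟨i, hcon⟩⟩)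
      have step : ∑ i : Fin n, (f x - f (bflip i x))^2
          ≤ ∑ i : Fin n, ε * |f x - f (bflip i x)| := by
        apply Finset.sum_le_sum
        intro i _
        have h1 := hsmall i
        have habs0 := abs_nonneg (f x - f (bflip i x))
        nlinarith [sq_abs (f x - f (bflip i x))]
      have step2 : ∑ i : Fin n, ε * |f x - f (bflip i x)| ≤ ε * (8*K) := by
        rw [← Finset.mul_sum]
        have := sum_abs_delta_le hdeg hf x
        rw [← hK] at this
        nlinarith
      linarith
  -- main chain
  have hcard2 : ((univ : Finset (Fin n → Bool)).card : ℝ) = 2^n := by simp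
  have hchain : 4 * V ≤ (∑ x : Fin n → Bool, ∑ i : Fin n, (f x - f (bflip i x))^2) / 2^n := by
    have h1 := totalVar_le_sum_influence f
    have h2 : ∑ i : Fin n, (4 * influence f i)
        = (∑ x : Fin n → Bool, ∑ i : Fin n, (f x - f (bflip i x))^2) / 2^n := by
      rw [Finset.sum_congr rfl (fun i _ => influence_eq f i)]
      simp only [bexpect]
      rw [← Finset.sum_div]
      congr 1
      exact Finset.sum_comm
    rw [← h2, ← Finset.mul_sum]
    linarith
  have hsb : ∑ x : Fin n → Bool, ∑ i : Fin n, (f x - f (bflip i x))^2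
      ≤ (B.card : ℝ) * (8*K) + 2^n * (ε*(8*K)) := by
    calc ∑ x : Fin n → Bool, ∑ i : Fin n, (f x - f (bflip i x))^2
        ≤ ∑ x : Fin n → Bool,
            ((if x ∈ B then (8*K - ε*(8*K)) else 0) + ε*(8*K)) :=
          Finset.sum_le_sum (fun x _ => hpoint x)
      _ = (B.card : ℝ) * (8*K - ε*(8*K)) + 2^n * (ε*(8*K)) := by
          rw [Finset.sum_add_distrib, Finset.sum_ite_mem, Finset.univ_inter,
            Finset.sum_const, Finset.sum_const, nsmul_eq_mul, nsmul_eq_mul, hcard2]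
      _ ≤ (B.card : ℝ) * (8*K) + 2^n * (ε*(8*K)) := by
          have hc : (0:ℝ) ≤ (B.card : ℝ) := Nat.cast_nonneg _
          nlinarith [mul_pos hεpos hKpos]
  have h2n : (0:ℝ) < 2^n := by positivity
  have h4 : 4*V ≤ ((B.card:ℝ)/2^n)*(8*K) + ε*(8*K) := by
    have hA : (∑ x : Fin n → Bool, ∑ i : Fin n, (f x - f (bflip i x))^2) / 2^n
        ≤ ((B.card:ℝ)*(8*K) + 2^n*(ε*(8*K)))/2^n := (div_le_div_iff_of_pos_right h2n).mpr hsb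
    have heq : ((B.card:ℝ)*(8*K) + 2^n*(ε*(8*K)))/2^n
        = ((B.card:ℝ)/2^n)*(8*K) + ε*(8*K) := by
      field_simp
    linarith [hchain]
  have hmu : 3*V ≤ ((B.card:ℝ)/2^n)*(8*K) := by linarith
  have hv3 : V^3 ≤ V := by
    have hsq : V^2 ≤ 1 := by nlinarith
    nlinarith
  have s1 : V^3/(d:ℝ)^(10:ℕ) ≤ V/(d:ℝ)^(10:ℕ) :=
    (div_le_div_iff_of_pos_right (by positivity)).mpr hv3
  have s2 : V/(d:ℝ)^(10:ℕ) ≤ V/(8*K) :=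
    div_le_div_of_nonneg_left (le_of_lt hVpos) (by positivity) hd10
  have s3 : V/(8*K) ≤ (B.card:ℝ)/2^n := by
    rw [div_le_iff₀ (by positivity)]
    have hc : (0:ℝ) ≤ (B.card : ℝ) := Nat.cast_nonneg _
    nlinarith
  linarith
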